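/- arXiv:2505.16568 — 2 statements merged into one kernel-verified Lean document; each statement's English description precedes it below -/
import Mathlib

section
/- Let R be a commutative Noetherian ring and M a finitely generated R-module. If M is self-dual and 3-torsionfree, then Ext_R^1(M, R) = 0. -/
open CategoryTheory

universe u

variable (R : Type u) [CommRing R]

/-- Vanishing of `Ext_R^i(M, N)`. -/
def ExtVanishes (M N : Type u) [AddCommGroup M] [Module R M] [AddCommGroup N] [Module R N]
    (i : ℕ) : Prop :=
  Subsingleton (((Ext R (ModuleCat.{u} R) i).obj (Opposite.op (ModuleCat.of R M))).obj
    (ModuleCat.of R N))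

/-- `M` is self-dual: `M ≅ M^* = Hom_R(M, R)`. -/
def IsSelfDual (M : Type u) [AddCommGroup M] [Module R M] : Prop :=
  Nonempty (M ≃ₗ[R] (M →ₗ[R] R))

/-- `M` is `n`-torsionfree: for some (equivalently, any) finite free presentation
`F₁ → F₀ → M → 0` given by a matrix `A`, the Auslander transpose `Tr M`, i.e. the
cokernel of the dualized map (given by the transposed matrix `Aᵀ`), satisfies
`Ext_R^i(Tr M, R) = 0` for `i = 1, …, n`. -/
def IsNTorsionfree (n : ℕ) (M : Type u) [AddCommGroup M] [Module R M] : Prop :=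
  ∃ (p q : ℕ) (A : Matrix (Fin p) (Fin q) R),
    Nonempty (M ≃ₗ[R] ((Fin p → R) ⧸ LinearMap.range (Matrix.toLin' A))) ∧
    ∀ i, 1 ≤ i → i ≤ n →
      ExtVanishes R ((Fin q → R) ⧸ LinearMap.range (Matrix.toLin' A.transpose)) R i

/-- `M` is totally reflexive (Gorenstein projective): `M` is reflexive and
`Ext_R^i(M, R) = Ext_R^i(M^*, R) = 0` for all `i > 0`. -/
def IsTotallyReflexive (M : Type u) [AddCommGroup M] [Module R M] : Prop :=
  Module.IsReflexive R M ∧ (∀ i, 0 < i → ExtVanishes R M R i) ∧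
    (∀ i, 0 < i → ExtVanishes R (M →ₗ[R] R) R i)

/-- `N` is a syzygy `Ω M` of `M`: the kernel of a surjection `P → M` with `P`
finitely generated projective. -/
def IsSyzygyOf (N M : Type u) [AddCommGroup N] [Module R N] [AddCommGroup M] [Module R M] :
    Prop :=
  ∃ (P : Type u) (_ : AddCommGroup P) (_ : Module R P) (g : P →ₗ[R] M),
    Module.Projective R P ∧ Module.Finite R P ∧ Function.Surjective g ∧
      Nonempty (N ≃ₗ[R] LinearMap.ker g)

/-- `N` is an `n`-th syzygy `Ωⁿ M` of `M`. -/
def IsNthSyzygyOf (n : ℕ) (N M : Type u) [AddCommGroup N] [Module R N]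
    [AddCommGroup M] [Module R M] : Prop :=
  match n with
  | 0 => Nonempty (N ≃ₗ[R] M)
  | n + 1 => ∃ (K : Type u) (_ : AddCommGroup K) (_ : Module R K),
      IsSyzygyOf R K M ∧ IsNthSyzygyOf n N K

/-- Every finitely generated reflexive `R`-module is self-dual (property (sd)). -/
def SDProperty : Prop :=
  ∀ (M : Type u) (_ : AddCommGroup M) (_ : Module R M),
    Module.Finite R M → Module.IsReflexive R M → IsSelfDual R M

/-- The depth of a Noetherian local ring is at least `t`: there is an `R`-regular
sequence of length `t` inside the maximal ideal. -/
def DepthGE [IsLocalRing R] (t : ℕ) : Prop :=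
  ∃ rs : List R, rs.length = t ∧ (∀ r ∈ rs, r ∈ IsLocalRing.maximalIdeal R) ∧
    RingTheory.Sequence.IsRegular R rs

/-- The depth of a Noetherian local ring is at most `t`: every `R`-regular sequence
inside the maximal ideal has length at most `t`. -/
def DepthLE [IsLocalRing R] (t : ℕ) : Prop :=
  ∀ rs : List R, (∀ r ∈ rs, r ∈ IsLocalRing.maximalIdeal R) →
    RingTheory.Sequence.IsRegular R rs → rs.length ≤ t

/-- A local ring is Gorenstein if it has finite injective dimension over itself,
equivalently there is `n` such that `Ext_R^i(N, R) = 0` for all modules `N` and all `i > n`. -/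
def IsGorensteinLocalRing : Prop :=
  ∃ n : ℕ, ∀ (N : Type u) (_ : AddCommGroup N) (_ : Module R N), ∀ i, n < i →
    ExtVanishes R N R i


/-! ### Auxiliary machinery -/

section AuxSubsingleton

variable {S : Type u} [CommRing S]

lemma ModuleCatAux.subsingleton_of_iso {X Y : ModuleCat.{u} S} (e : X ≅ Y)
    (h : Subsingleton X) : Subsingleton Y :=
  Function.Surjective.subsingleton (f := e.hom) (fun y => ⟨e.inv y, by
    have h2 := e.inv_hom_id
    calc e.hom (e.inv y) = (e.inv ≫ e.hom) y := rfl
    _ = y := by rw [h2]; rfl⟩)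

lemma ModuleCatAux.subsingleton_of_isZero {X : ModuleCat.{u} S}
    (h : CategoryTheory.Limits.IsZero X) : Subsingleton X := by
  have h1 : (𝟙 X : X ⟶ X) = 0 := h.eq_of_src _ _
  refine ⟨fun a b => ?_⟩
  have ha := LinearMap.congr_fun (congrArg ModuleCat.Hom.hom h1) a
  have hb := LinearMap.congr_fun (congrArg ModuleCat.Hom.hom h1) b
  simp only [ModuleCat.hom_zero, LinearMap.zero_apply] at ha hb
  calc a = (𝟙 X : X ⟶ X) a := rfl
  _ = 0 := ha
  _ = (𝟙 X : X ⟶ X) b := hb.symm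
  _ = b := rfl

lemma extVanishes_of_linearEquiv {M N : Type u}
    [AddCommGroup M] [Module S M] [AddCommGroup N] [Module S N]
    (P : Type u) [AddCommGroup P] [Module S P] (e : M ≃ₗ[S] N) (i : ℕ)
    (h : ExtVanishes S M P i) : ExtVanishes S N P i := by
  have h' : Subsingleton (((Ext S (ModuleCat.{u} S) i).obj
      (Opposite.op (ModuleCat.of S M))).obj (ModuleCat.of S P)) := h
  exact ModuleCatAux.subsingleton_of_iso
    (((Ext S (ModuleCat.{u} S) i).mapIso e.toModuleIso.op.symm).app (ModuleCat.of S P)) h'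

end AuxSubsingleton

section AuxDual

variable {S : Type u} [CommRing S]

lemma piRing_comp_toLin' {p q : ℕ} (A : Matrix (Fin p) (Fin q) S)
    (ψ : (Fin p → S) →ₗ[S] S) :
    LinearEquiv.piRing S S (Fin q) S (ψ ∘ₗ Matrix.toLin' A) =
      Matrix.toLin' A.transpose (LinearEquiv.piRing S S (Fin p) S ψ) := by
  funext j
  have h1 : Matrix.toLin' A (Pi.single j 1) = ∑ i, A i j • (Pi.single i 1 : Fin p → S) := by
    rw [Matrix.toLin'_apply]
    funext i
    simp [Matrix.mulVec_single, Finset.sum_apply, Pi.single_apply, Finset.sum_ite_eq']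
  simp only [LinearEquiv.piRing_apply, LinearMap.comp_apply, h1, map_sum, map_smul,
    Matrix.toLin'_apply, Matrix.mulVec, dotProduct, Matrix.transpose_apply,
    smul_eq_mul]

variable {p q : ℕ} (A : Matrix (Fin p) (Fin q) S)

lemma mkQ_comp_toLin' :
    (Submodule.mkQ (LinearMap.range (Matrix.toLin' A))) ∘ₗ Matrix.toLin' A = 0 := by
  refine LinearMap.ext fun x => ?_
  simp only [LinearMap.comp_apply, Submodule.mkQ_apply, LinearMap.zero_apply]
  exact (Submodule.Quotient.mk_eq_zero _).2 ⟨x, rfl⟩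

noncomputable def dualToKer :
    (((Fin p → S) ⧸ LinearMap.range (Matrix.toLin' A)) →ₗ[S] S) →ₗ[S]
      LinearMap.ker (Matrix.toLin' A.transpose) :=
  LinearMap.codRestrict _
    ((LinearEquiv.piRing S S (Fin p) S).toLinearMap ∘ₗ
      LinearMap.lcomp S S (Submodule.mkQ (LinearMap.range (Matrix.toLin' A))))
    (fun φ => by
      rw [LinearMap.mem_ker]
      have h0 : (φ ∘ₗ Submodule.mkQ (LinearMap.range (Matrix.toLin' A))) ∘ₗ
          Matrix.toLin' A = 0 := by
        rw [LinearMap.comp_assoc, mkQ_comp_toLin', LinearMap.comp_zero]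
      have h2 := piRing_comp_toLin' A (φ ∘ₗ Submodule.mkQ (LinearMap.range (Matrix.toLin' A)))
      rw [h0, map_zero] at h2
      exact h2.symm)

lemma dualToKer_coe (φ : ((Fin p → S) ⧸ LinearMap.range (Matrix.toLin' A)) →ₗ[S] S) :
    (dualToKer A φ : Fin p → S) =
      LinearEquiv.piRing S S (Fin p) S
        (φ ∘ₗ Submodule.mkQ (LinearMap.range (Matrix.toLin' A))) := rfl

lemma dualToKer_bijective : Function.Bijective (dualToKer A) := by
  constructor
  · intro φ ψ h
    have h' := congrArg (Subtype.val) h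
    rw [dualToKer_coe, dualToKer_coe] at h'
    exact Submodule.linearMap_qext _ ((LinearEquiv.piRing S S (Fin p) S).injective h')
  · intro x
    have hker : LinearMap.range (Matrix.toLin' A) ≤
        LinearMap.ker ((LinearEquiv.piRing S S (Fin p) S).symm x.1) := by
      rintro v ⟨z, rfl⟩
      rw [LinearMap.mem_ker]
      have h1 : LinearEquiv.piRing S S (Fin q) S
          (((LinearEquiv.piRing S S (Fin p) S).symm x.1) ∘ₗ Matrix.toLin' A) = 0 := by
        rw [piRing_comp_toLin', LinearEquiv.apply_symm_apply]
        exact x.2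
      have h0 : ((LinearEquiv.piRing S S (Fin p) S).symm x.1) ∘ₗ Matrix.toLin' A = 0 :=
        (LinearEquiv.piRing S S (Fin q) S).injective (by rw [h1, map_zero])
      exact LinearMap.congr_fun h0 z
    refine ⟨Submodule.liftQ _ _ hker, ?_⟩
    apply Subtype.ext
    rw [dualToKer_coe, Submodule.liftQ_mkQ, LinearEquiv.apply_symm_apply]

/-- The dual of the cokernel of a matrix is the kernel of the transposed matrix. -/
noncomputable def dualEquivKer :
    (((Fin p → S) ⧸ LinearMap.range (Matrix.toLin' A)) →ₗ[S] S) ≃ₗ[S]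
      LinearMap.ker (Matrix.toLin' A.transpose) :=
  LinearEquiv.ofBijective _ (dualToKer_bijective A)

end AuxDual

section AuxHomological

variable {S : Type u} [CommRing S]
variable {N₁ N₀ : Type u} [AddCommGroup N₁] [Module S N₁] [AddCommGroup N₀] [Module S N₀]

/-- The start of a projective resolution of the cokernel of `f`, spliced with a
projective resolution of the kernel of `f`.  (This is only a resolution when
`ker f ⊆ N₁ → N₀` realizes the second syzygy of `coker f`, i.e. always, since the
complex `0 → ker f → N₁ → N₀ → coker f → 0` is exact.) -/
noncomputable def trComplex (f : N₁ →ₗ[S] N₀)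
    (Q : CategoryTheory.ProjectiveResolution (ModuleCat.of S (LinearMap.ker f))) :
    ChainComplex (ModuleCat.{u} S) ℕ :=
  ChainComplex.of
    (fun n => match n with
      | 0 => ModuleCat.of S N₀
      | 1 => ModuleCat.of S N₁
      | (n+2) => Q.complex.X n)
    (fun n => match n with
      | 0 => ModuleCat.ofHom f
      | 1 => Q.π.f 0 ≫ ModuleCat.ofHom (LinearMap.ker f).subtype
      | (n+2) => Q.complex.d (n+1) n)
    (fun n => match n with
      | 0 => by
          have hsf : ModuleCat.ofHom (LinearMap.ker f).subtype ≫ ModuleCat.ofHom f = 0 := by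
            refine ModuleCat.hom_ext (LinearMap.ext fun x => ?_)
            exact x.2
          change (Q.π.f 0 ≫ ModuleCat.ofHom (LinearMap.ker f).subtype) ≫ ModuleCat.ofHom f = 0
          exact (Category.assoc _ _ _).trans ((congrArg (fun g => Q.π.f 0 ≫ g) hsf).trans Limits.comp_zero)
      | 1 => by
          change Q.complex.d 1 0 ≫ (Q.π.f 0 ≫ ModuleCat.ofHom (LinearMap.ker f).subtype) = 0
          exact ((Category.assoc _ _ _).symm.trans (congrArg (fun g => g ≫ ModuleCat.ofHom (LinearMap.ker f).subtype) Q.complex_d_comp_π_f_zero)).trans Limits.zero_comp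
      | (n+2) => Q.complex.d_comp_d (n+2) (n+1) n)

namespace TrComplexAux

variable (f : N₁ →ₗ[S] N₀)
  (Q : CategoryTheory.ProjectiveResolution (ModuleCat.of S (LinearMap.ker f)))

lemma trComplex_d_1_0 : (trComplex f Q).d 1 0 = ModuleCat.ofHom f :=
  by simp [trComplex, ChainComplex.of.d]

lemma trComplex_d_2_1 :
    (trComplex f Q).d 2 1 = Q.π.f 0 ≫ ModuleCat.ofHom (LinearMap.ker f).subtype :=
  by simp [trComplex, ChainComplex.of.d]

lemma trComplex_d_succ (n : ℕ) :
    (trComplex f Q).d (n + 3) (n + 2) = Q.complex.d (n + 1) n :=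
  by simp [trComplex, ChainComplex.of.d]

lemma trComplex_exactAt_succ (n : ℕ) : (trComplex f Q).ExactAt (n + 1) := by
  rw [HomologicalComplex.exactAt_iff' _ (n + 2) (n + 1) n (by simp) (by simp)]
  match n with
  | 0 =>
    rw [ShortComplex.moduleCat_exact_iff]
    intro x hx
    have hx' : f x = 0 := hx
    obtain ⟨y, hy⟩ := (ModuleCat.epi_iff_surjective (Q.π.f 0)).1 inferInstance
      (⟨x, LinearMap.mem_ker.2 hx'⟩ : LinearMap.ker f)
    refine ⟨y, ?_⟩
    show (LinearMap.ker f).subtype (Q.π.f 0 y) = x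
    rw [hy]
    rfl
  | 1 =>
    rw [ShortComplex.moduleCat_exact_iff]
    intro x hx
    have hx' : (LinearMap.ker f).subtype ((Q.π.f 0) x) = 0 := hx
    have hx'' : (Q.π.f 0) x = 0 := Subtype.ext hx'
    obtain ⟨y, hy⟩ := (ShortComplex.moduleCat_exact_iff _).1 Q.exact₀ x hx''
    exact ⟨y, hy⟩
  | (n+2) =>
    refine ShortComplex.exact_of_iso
      (S₁ := ShortComplex.mk (Q.complex.d (n + 2) (n + 1)) (Q.complex.d (n + 1) n)
        (Q.complex.d_comp_d _ _ _)) ?_ (Q.exact_succ n)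
    refine ShortComplex.isoMk (Iso.refl _) (Iso.refl _) (Iso.refl _) ?_ ?_
    · simp only [Iso.refl_hom, Category.id_comp, Category.comp_id]
      exact trComplex_d_succ f Q (n + 1)
    · simp only [Iso.refl_hom, Category.id_comp, Category.comp_id]
      exact trComplex_d_succ f Q n

/-- The spliced complex is a projective resolution of the cokernel of `f`. -/
noncomputable def trResolution [Module.Projective S N₁] [Module.Projective S N₀] :
    CategoryTheory.ProjectiveResolution (ModuleCat.of S (N₀ ⧸ LinearMap.range f)) where
  complex := trComplex f Q
  projective n := by
    match n with
    | 0 => exact (IsProjective.iff_projective N₀).1 ‹Module.Projective S N₀›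
    | 1 => exact (IsProjective.iff_projective N₁).1 ‹Module.Projective S N₁›
    | (n+2) => exact Q.projective n
  π := (ChainComplex.toSingle₀Equiv _ _).symm ⟨ModuleCat.ofHom (LinearMap.range f).mkQ, by
    rw [trComplex_d_1_0]
    refine ModuleCat.hom_ext (LinearMap.ext fun x => ?_)
    exact (Submodule.Quotient.mk_eq_zero _).2 ⟨x, rfl⟩⟩
  quasiIso := ⟨fun n => by
    cases n with
    | zero =>
      have hcomp : ModuleCat.ofHom f ≫ ModuleCat.ofHom (LinearMap.range f).mkQ =
          (0 : ModuleCat.of S N₁ ⟶ ModuleCat.of S (N₀ ⧸ LinearMap.range f)) :=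
        ModuleCat.hom_ext (LinearMap.ext fun x => (Submodule.Quotient.mk_eq_zero _).2 ⟨x, rfl⟩)
      rw [ChainComplex.quasiIsoAt₀_iff, ShortComplex.quasiIso_iff_of_zeros']
      · refine (ShortComplex.exact_and_epi_g_iff_of_iso (S₂ := ShortComplex.mk
            (ModuleCat.ofHom f) (ModuleCat.ofHom (LinearMap.range f).mkQ) hcomp) ?_).2 ⟨?_, ?_⟩
        · refine ShortComplex.isoMk (Iso.refl _) (Iso.refl _) (Iso.refl _) ?_ ?_
          · simp only [Iso.refl_hom, Category.id_comp, Category.comp_id]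
            exact trComplex_d_1_0 f Q
          · simp
            rfl
        · rw [ShortComplex.moduleCat_exact_iff]
          intro x hx
          exact (Submodule.Quotient.mk_eq_zero _).1 hx
        · rw [ModuleCat.epi_iff_surjective]
          exact Submodule.mkQ_surjective _
      all_goals rfl
    | succ n =>
      rw [quasiIsoAt_iff_exactAt']
      · exact trComplex_exactAt_succ f Q n
      · exact ChainComplex.exactAt_succ_single_obj _ n⟩

end TrComplexAux

open TrComplexAux in
/-- Dimension shifting: `Ext³(coker f, S) = 0` implies `Ext¹(ker f, S) = 0`
when `f` is a map between projective modules. -/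
lemma extVanishes_ker_of_three (f : N₁ →ₗ[S] N₀)
    [Module.Projective S N₁] [Module.Projective S N₀]
    (h : Subsingleton (((Ext S (ModuleCat.{u} S) 3).obj
      (Opposite.op (ModuleCat.of S (N₀ ⧸ LinearMap.range f)))).obj (ModuleCat.of S S))) :
    Subsingleton (((Ext S (ModuleCat.{u} S) 1).obj
      (Opposite.op (ModuleCat.of S (LinearMap.ker f)))).obj (ModuleCat.of S S)) := by
  let Q : CategoryTheory.ProjectiveResolution (ModuleCat.of S (LinearMap.ker f)) :=
    CategoryTheory.ProjectiveResolution.of _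
  let T : CategoryTheory.ProjectiveResolution (ModuleCat.of S (N₀ ⧸ LinearMap.range f)) :=
    trResolution f Q
  let Y : ModuleCat.{u} S := ModuleCat.of S S
  have h3 : Subsingleton (((trComplex f Q).linearYonedaObj S Y).homology 3) :=
    ModuleCatAux.subsingleton_of_iso (T.isoExt 3 Y) h
  have hz : CategoryTheory.Limits.IsZero (((trComplex f Q).linearYonedaObj S Y).homology 3) :=
    ModuleCat.isZero_of_subsingleton _
  have he : ((trComplex f Q).linearYonedaObj S Y).ExactAt 3 :=
    (HomologicalComplex.exactAt_iff_isZero_homology _ _).2 hz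
  rw [HomologicalComplex.exactAt_iff' _ 2 3 4 (by simp) (by simp)] at he
  have he' : ((Q.complex.linearYonedaObj S Y).sc' 0 1 2).Exact := by
    refine ShortComplex.exact_of_iso
      (ShortComplex.isoMk (Iso.refl _) (Iso.refl _) (Iso.refl _) ?_ ?_) he
    · simp only [Iso.refl_hom, Category.id_comp, Category.comp_id]
    · simp only [Iso.refl_hom, Category.id_comp, Category.comp_id]
  have hq : (Q.complex.linearYonedaObj S Y).ExactAt 1 := by
    rw [HomologicalComplex.exactAt_iff' _ 0 1 2 (by simp) (by simp)]
    exact he'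
  have hz1 : CategoryTheory.Limits.IsZero ((Q.complex.linearYonedaObj S Y).homology 1) :=
    (HomologicalComplex.exactAt_iff_isZero_homology _ _).1 hq
  exact ModuleCatAux.subsingleton_of_iso (Q.isoExt 1 Y).symm
    (ModuleCatAux.subsingleton_of_isZero hz1)

end AuxHomological

/-- Let `R` be a commutative Noetherian ring and `M` a finitely generated `R`-module.
If `M` is self-dual and 3-torsionfree, then `Ext_R^1(M, R) = 0`. -/
theorem selfDual_threeTorsionfree_ext_one_vanishes
    (R : Type u) [CommRing R] [IsNoetherianRing R]
    (M : Type u) [AddCommGroup M] [Module R M] [Module.Finite R M]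
    (hsd : IsSelfDual R M) (htf : IsNTorsionfree R 3 M) :
    ExtVanishes R M R 1 := by
  obtain ⟨p, q, A, ⟨⟨e⟩, hext⟩⟩ := htf
  obtain ⟨d⟩ := hsd
  -- `M` is isomorphic to the kernel of the transposed matrix
  have e2 : M ≃ₗ[R] LinearMap.ker (Matrix.toLin' A.transpose) :=
    d.trans ((e.arrowCongr (LinearEquiv.refl R R)).trans (dualEquivKer A))
  have hproj₁ : Module.Projective R (Fin p → R) :=
    Module.Projective.of_basis (Pi.basisFun R (Fin p))
  have hproj₀ : Module.Projective R (Fin q → R) :=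
    Module.Projective.of_basis (Pi.basisFun R (Fin q))
  have h3 : ExtVanishes R ((Fin q → R) ⧸ LinearMap.range (Matrix.toLin' A.transpose)) R 3 :=
    hext 3 (by norm_num) (by norm_num)
  have h1 : ExtVanishes R (LinearMap.ker (Matrix.toLin' A.transpose)) R 1 :=
    extVanishes_ker_of_three (Matrix.toLin' A.transpose) h3
  exact extVanishes_of_linearEquiv R e2.symm 1 h1
end

section
/- Let R be a commutative Noetherian ring and M a finitely generated self-dual R-module. Then M is totally reflexive if and only if Ext_R^i(M, R) = 0 for all i > 0. -/
open CategoryTheory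

universe u

variable (R : Type u) [CommRing R]

theorem reflexive_of_selfDual_aux (R M : Type u) [CommRing R] [AddCommGroup M] [Module R M]
    [Module.Finite R M] (σ : M ≃ₗ[R] (M →ₗ[R] R)) : Module.IsReflexive R M := by
  classical
  let r : Module.Dual R (Module.Dual R M) →ₗ[R] M :=
    σ.symm.toLinearMap ∘ₗ (σ.toLinearMap.flip.dualMap)
  have hre : ∀ m : M, r (Module.Dual.eval R M m) = m := by
    intro m
    have h1 : σ.toLinearMap.flip.dualMap (Module.Dual.eval R M m) = σ m := by
      ext x
      simp [LinearMap.dualMap_apply, Module.Dual.eval]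
    simp only [r, LinearMap.comp_apply, h1, LinearEquiv.coe_coe, LinearEquiv.symm_apply_apply]
  have hrsurj : Function.Surjective r := fun m => ⟨Module.Dual.eval R M m, hre m⟩
  let t : Module.Dual R (Module.Dual R M) ≃ₗ[R] M := σ.dualMap.trans σ.symm
  have hs : Function.Surjective (r ∘ₗ (t.symm : M →ₗ[R] Module.Dual R (Module.Dual R M))) :=
    hrsurj.comp t.symm.surjective
  have hinj : Function.Injective (r ∘ₗ (t.symm : M →ₗ[R] Module.Dual R (Module.Dual R M))) :=
    OrzechProperty.injective_of_surjective_endomorphism _ hs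
  have hrinj : Function.Injective r := by
    intro a b hab
    have h2 : (r ∘ₗ (t.symm : M →ₗ[R] _)) (t a) = (r ∘ₗ (t.symm : M →ₗ[R] _)) (t b) := by
      simp [hab]
    exact t.injective (by simpa using hinj h2)
  refine ⟨⟨fun a b hab => ?_, fun φ => ⟨r φ, hrinj (by rw [hre])⟩⟩⟩
  have := congrArg r hab
  rwa [hre, hre] at this

theorem extVanishes_congr_aux (R : Type u) [CommRing R] (M N : Type u) [AddCommGroup M]
    [Module R M] [AddCommGroup N] [Module R N] (e : M ≃ₗ[R] N) (i : ℕ)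
    (h : ExtVanishes R M R i) : ExtVanishes R N R i := by
  have iso := (((Ext R (ModuleCat.{u} R) i).mapIso e.toModuleIso.op.symm).app (ModuleCat.of R R))
  haveI : Subsingleton (((Ext R (ModuleCat.{u} R) i).obj
      (Opposite.op (ModuleCat.of R M))).obj (ModuleCat.of R R)) := h
  exact Equiv.subsingleton ((forget (ModuleCat R)).mapIso iso).toEquiv.symm

/-- A finitely generated self-dual module over a commutative Noetherian ring is totally
reflexive iff `Ext_R^i(M, R) = 0` for all `i > 0`. -/
theorem selfDual_totallyReflexive_iff_ext_vanishes
    (R : Type u) [CommRing R] [IsNoetherianRing R]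
    (M : Type u) [AddCommGroup M] [Module R M] [Module.Finite R M]
    (hsd : IsSelfDual R M) :
    IsTotallyReflexive R M ↔ ∀ i, 0 < i → ExtVanishes R M R i := by
  obtain ⟨σ⟩ := hsd
  constructor
  · exact fun h => h.2.1
  · intro h
    exact ⟨reflexive_of_selfDual_aux R M σ, h,
      fun i hi => extVanishes_congr_aux R M (M →ₗ[R] R) σ i (h i hi)⟩
end
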